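/- Let q be prime and t ≥ 1, and let n = q^t + 1. For every partition σ of n all of whose parts are at most n - 2, the multinomial coefficient n!/∏σ_i! is divisible by q. -/

import Mathlib

/-- The multinomial coefficient of a partition given as a multiset. -/
def multinom (n : ℕ) (σ : Multiset ℕ) : ℕ :=
  n.factorial / (σ.map Nat.factorial).prod

/-- σ is a partition of n: positive parts summing to n. -/
def IsPartition (n : ℕ) (σ : Multiset ℕ) : Prop :=
  (∀ x ∈ σ, 0 < x) ∧ σ.sum = n

lemma prod_factorial_dvd (σ : Multiset ℕ) :
    (σ.map Nat.factorial).prod ∣ σ.sum.factorial := by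
  induction σ using Multiset.induction with
  | empty => simp
  | cons a s ih =>
    simp only [Multiset.map_cons, Multiset.prod_cons, Multiset.sum_cons]
    calc a.factorial * (s.map Nat.factorial).prod
        ∣ a.factorial * s.sum.factorial := mul_dvd_mul_left _ ih
      _ ∣ (a + s.sum).factorial := Nat.factorial_mul_factorial_dvd_factorial_add a s.sum

lemma multinom_split (σ : Multiset ℕ) (a : ℕ) (ha : a ∈ σ) :
    multinom σ.sum σ = (σ.sum).choose a * multinom (σ.erase a).sum (σ.erase a) := by
  set s := σ.erase a with hs
  have hσ : σ = a ::ₘ s := (Multiset.cons_erase ha).symm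
  set m := s.sum with hm
  have hsum : σ.sum = a + m := by rw [hσ]; simp; exact hm.symm
  obtain ⟨c, hc⟩ := prod_factorial_dvd s
  rw [← hm] at hc
  have hP : (s.map Nat.factorial).prod ≠ 0 := by
    refine Multiset.prod_ne_zero ?_
    simp only [Multiset.mem_map]
    rintro ⟨x, -, hx⟩
    exact (Nat.factorial_ne_zero x) hx
  have hfact : (a + m).factorial = (a + m).choose a * a.factorial * m.factorial := by
    rw [← Nat.choose_mul_factorial_mul_factorial (Nat.le_add_right a m)]
    simp
  have hprod : (σ.map Nat.factorial).prod = a.factorial * (s.map Nat.factorial).prod := by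
    rw [hσ]; simp
  rw [multinom, multinom, hsum, hprod, hfact, hc]
  have h1 : (a + m).choose a * a.factorial * ((s.map Nat.factorial).prod * c) =
      a.factorial * (s.map Nat.factorial).prod * ((a + m).choose a * c) := by ring
  rw [h1, Nat.mul_div_cancel_left _ (Nat.mul_pos (Nat.factorial_pos a) (Nat.pos_of_ne_zero hP)),
    Nat.mul_div_cancel_left _ (Nat.pos_of_ne_zero hP)]

lemma key_choose (q t a : ℕ) (hq : q.Prime) (h2 : 2 ≤ a) (hle : a ≤ q ^ t - 1) :
    q ∣ (q ^ t + 1).choose a := by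
  have hqt : 1 ≤ q ^ t := Nat.one_le_pow _ _ hq.pos
  have haq : a < q ^ t := lt_of_le_of_lt hle (Nat.sub_lt hqt one_pos)
  obtain ⟨k, rfl⟩ : ∃ k, a = k + 1 := ⟨a - 1, (Nat.succ_pred_eq_of_pos (by omega)).symm⟩
  rw [Nat.choose_succ_succ]
  refine Nat.dvd_add ?_ ?_
  · exact hq.dvd_choose_pow (by omega) (by omega)
  · exact hq.dvd_choose_pow (by omega) (by omega)

theorem prime_pow_succ_all_dvd (q t : ℕ) (hq : q.Prime) (ht : 1 ≤ t)
    (σ : Multiset ℕ) (hσ : IsPartition (q ^ t + 1) σ)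
    (hparts : ∀ x ∈ σ, x ≤ q ^ t + 1 - 2) :
    q ∣ multinom (q ^ t + 1) σ := by
  obtain ⟨hpos, hsum⟩ := hσ
  by_cases h : ∃ a ∈ σ, 2 ≤ a
  · obtain ⟨a, haσ, ha2⟩ := h
    have hsplit := multinom_split σ a haσ
    rw [hsum] at hsplit
    rw [hsplit]
    have hle : a ≤ q ^ t - 1 := by
      have := hparts a haσ
      have hqt : 2 ≤ q ^ t := by
        calc 2 ≤ q := hq.two_le
        _ ≤ q ^ t := Nat.le_self_pow (by omega) q
      omega
    exact Dvd.dvd.mul_right (key_choose q t a hq ha2 hle) _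
  · push_neg at h
    have hall : ∀ x ∈ σ, x = 1 := fun x hx => by
      have := hpos x hx; have := h x hx; omega
    have hprod : (σ.map Nat.factorial).prod = 1 := by
      refine Multiset.prod_eq_one ?_
      simp only [Multiset.mem_map]
      rintro x ⟨y, hy, rfl⟩
      rw [hall y hy]; rfl
    rw [multinom, hprod, Nat.div_one]
    exact Nat.dvd_factorial hq.pos (by
      calc q ≤ q ^ t := Nat.le_self_pow (by omega) q
      _ ≤ q ^ t + 1 := Nat.le_succ _)
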